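/- Let h ∈ ℂ with h ∉ 2πi·ℚ, q := exp(h), and let ℓ, m₀ ∈ ℂ satisfy q^{2(m₀+k)} ≠ −1 for all k ∈ ℤ. Let V = ⊕_{k∈ℤ} ℂ·e_k and define ℂ-linear endomorphisms I₂₁, I₃₂ of V by I₂₁ e_k = i·[m₀+k]·e_k and I₃₂ e_k = a_k·e_{k+1} − e_{k−1}, where a_k := [ℓ+m₀+k+1]·[ℓ−m₀−k] / ((q^{m₀+k}+q^{−(m₀+k)})·(q^{m₀+k+1}+q^{−(m₀+k+1)})). Then I₂₁ and I₃₂ satisfy the defining relations of U_q^{tw}(so₃): I₃₂²I₂₁ − [2]·I₃₂I₂₁I₃₂ + I₂₁I₃₂² = −I₂₁ and I₂₁²I₃₂ − [2]·I₂₁I₃₂I₂₁ + I₃₂I₂₁² = −I₃₂ (as endomorphisms of V). Hence V carries a U_q^{tw}(so₃)-module structure, the generic Gelfand–Tsetlin representation V^ℓ_{m₀}. -/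

import Mathlib

/-- `q^b := exp(h·b)`. -/
noncomputable def qpow (h b : ℂ) : ℂ := Complex.exp (h * b)

/-- the q-number `[b] := (q^b − q^{−b})/(q − q^{−1})` where `q = exp h`. -/
noncomputable def qnum (h b : ℂ) : ℂ :=
  (Complex.exp (h * b) - Complex.exp (-(h * b))) / (Complex.exp h - Complex.exp (-h))

/-- The rationalized Gelfand–Tsetlin coefficient
`a_k = [ℓ+m₀+k+1][ℓ−m₀−k]/((q^{m₀+k}+q^{−(m₀+k)})(q^{m₀+k+1}+q^{−(m₀+k+1)}))`. -/
noncomputable def gtA (h ℓ m₀ : ℂ) (k : ℤ) : ℂ :=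
  qnum h (ℓ + m₀ + k + 1) * qnum h (ℓ - m₀ - k) /
    ((qpow h (m₀ + k) + qpow h (-(m₀ + k))) *
      (qpow h (m₀ + k + 1) + qpow h (-(m₀ + k + 1))))

lemma qnum_eq' (h b : ℂ) : qnum h b =
    (Complex.exp (h*b) - (Complex.exp (h*b))⁻¹) / (Complex.exp h - (Complex.exp h)⁻¹) := by
  rw [qnum, Complex.exp_neg, Complex.exp_neg]

lemma gtA_eq' (h ℓ m₀ : ℂ) (k : ℤ) :
    gtA h ℓ m₀ k =
      ((Complex.exp (h*ℓ) * Complex.exp (h*(m₀+k)) * Complex.exp h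
          - (Complex.exp (h*ℓ) * Complex.exp (h*(m₀+k)) * Complex.exp h)⁻¹) *
        (Complex.exp (h*ℓ) * (Complex.exp (h*(m₀+k)))⁻¹
          - (Complex.exp (h*ℓ) * (Complex.exp (h*(m₀+k)))⁻¹)⁻¹)) /
      ((Complex.exp h - (Complex.exp h)⁻¹) * (Complex.exp h - (Complex.exp h)⁻¹) *
        ((Complex.exp (h*(m₀+k)) + (Complex.exp (h*(m₀+k)))⁻¹) *
          (Complex.exp (h*(m₀+k)) * Complex.exp h
            + (Complex.exp (h*(m₀+k)) * Complex.exp h)⁻¹))) := by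
  have e1 : Complex.exp (h*(ℓ+m₀+(k:ℂ)+1))
      = Complex.exp (h*ℓ) * Complex.exp (h*(m₀+(k:ℂ))) * Complex.exp h := by
    rw [show h*(ℓ+m₀+(k:ℂ)+1) = h*ℓ + h*(m₀+(k:ℂ)) + h by ring, Complex.exp_add,
      Complex.exp_add]
  have e2 : Complex.exp (h*(ℓ-m₀-(k:ℂ)))
      = Complex.exp (h*ℓ) * (Complex.exp (h*(m₀+(k:ℂ))))⁻¹ := by
    rw [show h*(ℓ-m₀-(k:ℂ)) = h*ℓ + -(h*(m₀+(k:ℂ))) by ring, Complex.exp_add,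
      Complex.exp_neg]
  have e3 : Complex.exp (h * -(m₀+(k:ℂ))) = (Complex.exp (h*(m₀+(k:ℂ))))⁻¹ := by
    rw [show h * -(m₀+(k:ℂ)) = -(h*(m₀+(k:ℂ))) by ring, Complex.exp_neg]
  have e4 : Complex.exp (h*(m₀+(k:ℂ)+1)) = Complex.exp (h*(m₀+(k:ℂ))) * Complex.exp h := by
    rw [show h*(m₀+(k:ℂ)+1) = h*(m₀+(k:ℂ)) + h by ring, Complex.exp_add]
  have e5 : Complex.exp (h * -(m₀+(k:ℂ)+1))
      = (Complex.exp (h*(m₀+(k:ℂ))) * Complex.exp h)⁻¹ := by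
    rw [show h * -(m₀+(k:ℂ)+1) = -(h*(m₀+(k:ℂ)) + h) by ring, Complex.exp_neg,
      Complex.exp_add]
  rw [gtA, qnum_eq', qnum_eq', qpow, qpow, qpow, qpow, e1, e2, e3, e4, e5,
    div_mul_div_comm, div_div]

set_option maxHeartbeats 2000000 in
theorem stmt_8 (h : ℂ) (hh : ∀ r : ℚ, h ≠ 2 * Real.pi * Complex.I * r)
    (ℓ m₀ : ℂ) (hm : ∀ k : ℤ, qpow h (2 * (m₀ + k)) ≠ -1)
    (I21 I32 : Module.End ℂ (ℤ →₀ ℂ))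
    (hI21 : ∀ k : ℤ, I21 (Finsupp.single k 1) =
      (Complex.I * qnum h (m₀ + k)) • Finsupp.single k 1)
    (hI32 : ∀ k : ℤ, I32 (Finsupp.single k 1) =
      gtA h ℓ m₀ k • Finsupp.single (k + 1) 1 - Finsupp.single (k - 1) 1) :
    I32 * I32 * I21 - qnum h 2 • (I32 * I21 * I32) + I21 * (I32 * I32) = -I21 ∧
    I21 * I21 * I32 - qnum h 2 • (I21 * I32 * I21) + I32 * (I21 * I21) = -I32 := by
  have hT0 : Complex.exp h ≠ 0 := Complex.exp_ne_zero h
  have hD : Complex.exp h - (Complex.exp h)⁻¹ ≠ 0 := by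
    intro hc
    rw [sub_eq_zero] at hc
    have h1 : Complex.exp (h + h) = 1 := by
      rw [Complex.exp_add, mul_eq_one_iff_eq_inv₀ hT0]
      exact hc
    rw [Complex.exp_eq_one_iff] at h1
    obtain ⟨n, hn⟩ := h1
    apply hh ((n : ℚ)/2)
    have hcast : (((n : ℚ)/2 : ℚ) : ℂ) = (n : ℂ)/2 := by push_cast; ring
    rw [hcast]
    linear_combination hn / 2
  have hsq : ∀ j : ℤ, Complex.exp (h*(m₀+(j:ℂ))) * Complex.exp (h*(m₀+(j:ℂ))) ≠ -1 := by
    intro j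
    have hj := hm j
    rw [qpow, show h*(2*(m₀+(j:ℂ))) = h*(m₀+(j:ℂ)) + h*(m₀+(j:ℂ)) by ring,
      Complex.exp_add] at hj
    exact hj
  have key : ∀ W : ℂ, W ≠ 0 → W * W ≠ -1 → W + W⁻¹ ≠ 0 := by
    intro W hW h2 hc
    apply h2
    have h3 := congrArg (fun z => z * W) hc
    simp only [add_mul, inv_mul_cancel₀ hW, zero_mul] at h3
    linear_combination h3
  constructor
  · -- first relation
    apply Finsupp.lhom_ext
    intro k b
    have hb : (Finsupp.single k b : ℤ →₀ ℂ) = b • Finsupp.single k 1 := by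
      rw [Finsupp.smul_single' b k 1, mul_one]
    rw [hb, map_smul, map_smul]
    congr 1
    have hU0 : Complex.exp (h*(m₀+(k:ℂ))) ≠ 0 := Complex.exp_ne_zero _
    have hX0 : Complex.exp (h*ℓ) ≠ 0 := Complex.exp_ne_zero _
    have c1 : Complex.exp (h * (m₀ + ((k:ℂ) + 1)))
        = Complex.exp (h*(m₀+(k:ℂ))) * Complex.exp h := by
      rw [show h * (m₀ + ((k:ℂ)+1)) = h*(m₀+(k:ℂ)) + h by ring, Complex.exp_add]
    have c2 : Complex.exp (h * (m₀ + ((k:ℂ) + 1 + 1)))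
        = Complex.exp (h*(m₀+(k:ℂ))) * Complex.exp h * Complex.exp h := by
      rw [show h * (m₀ + ((k:ℂ)+1+1)) = h*(m₀+(k:ℂ)) + h + h by ring, Complex.exp_add,
        Complex.exp_add]
    have c3 : Complex.exp (h * (m₀ + ((k:ℂ) - 1)))
        = Complex.exp (h*(m₀+(k:ℂ))) * (Complex.exp h)⁻¹ := by
      rw [show h * (m₀ + ((k:ℂ)-1)) = h*(m₀+(k:ℂ)) + -h by ring, Complex.exp_add,
        Complex.exp_neg]
    have c4 : Complex.exp (h * (m₀ + ((k:ℂ) - 1 - 1)))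
        = Complex.exp (h*(m₀+(k:ℂ))) * (Complex.exp h)⁻¹ * (Complex.exp h)⁻¹ := by
      rw [show h * (m₀ + ((k:ℂ)-1-1)) = h*(m₀+(k:ℂ)) + -h + -h by ring, Complex.exp_add,
        Complex.exp_add, Complex.exp_neg]
    have c7 : Complex.exp (h * 2) = Complex.exp h * Complex.exp h := by
      rw [show h * 2 = h + h by ring, Complex.exp_add]
    have hS0 : Complex.exp (h*(m₀+(k:ℂ))) + (Complex.exp (h*(m₀+(k:ℂ))))⁻¹ ≠ 0 :=
      key _ hU0 (hsq k)
    have hS1 : Complex.exp (h*(m₀+(k:ℂ))) * Complex.exp h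
        + (Complex.exp (h*(m₀+(k:ℂ))) * Complex.exp h)⁻¹ ≠ 0 := by
      have e := hsq (k+1)
      rw [show ((k+1 : ℤ):ℂ) = (k:ℂ)+1 by push_cast; ring, c1] at e
      exact key _ (mul_ne_zero hU0 hT0) e
    have hSm1 : Complex.exp (h*(m₀+(k:ℂ))) * (Complex.exp h)⁻¹
        + (Complex.exp (h*(m₀+(k:ℂ))) * (Complex.exp h)⁻¹)⁻¹ ≠ 0 := by
      have e := hsq (k-1)
      rw [show ((k-1 : ℤ):ℂ) = (k:ℂ)-1 by push_cast; ring, c3] at e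
      exact key _ (mul_ne_zero hU0 (inv_ne_zero hT0)) e
    set T := Complex.exp h with hTdef
    set U := Complex.exp (h*(m₀+(k:ℂ))) with hUdef
    set X := Complex.exp (h*ℓ) with hXdef
    have hDD : T * T - 1 ≠ 0 := by
      intro hc
      apply hD
      field_simp
      linear_combination hc
    have hP0 : U * U + 1 ≠ 0 := by
      intro hc
      exact hsq k (by linear_combination hc)
    have hP1 : U * U * (T * T) + 1 ≠ 0 := by
      intro hc
      have e := hsq (k+1)
      rw [show ((k+1 : ℤ):ℂ) = (k:ℂ)+1 by push_cast; ring, c1] at e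
      exact e (by linear_combination hc)
    have hPm1 : U * U + T * T ≠ 0 := by
      intro hc
      have e := hsq (k-1)
      rw [show ((k-1 : ℤ):ℂ) = (k:ℂ)-1 by push_cast; ring, c3] at e
      apply e
      field_simp
      linear_combination hc
    have B0 : qnum h (m₀ + (k:ℂ)) = (U*U - 1) * T / (U * (T*T - 1)) := by
      rw [qnum_eq', ← hTdef, ← hUdef, div_eq_div_iff hD (mul_ne_zero hU0 hDD)]
      field_simp
    have B1 : qnum h (m₀ + ((k:ℂ)+1)) = (U*U*(T*T) - 1) / (U * (T*T - 1)) := by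
      rw [qnum_eq', c1, ← hTdef, div_eq_div_iff hD (mul_ne_zero hU0 hDD)]
      field_simp
    have B2 : qnum h (m₀ + ((k:ℂ)+1+1)) = (U*U*(T*T)*(T*T) - 1) / (U*T*(T*T - 1)) := by
      rw [qnum_eq', c2, ← hTdef,
        div_eq_div_iff hD (mul_ne_zero (mul_ne_zero hU0 hT0) hDD)]
      field_simp
    have Bm1 : qnum h (m₀ + ((k:ℂ)-1)) = (U*U - T*T) / (U * (T*T - 1)) := by
      rw [qnum_eq', c3, ← hTdef, div_eq_div_iff hD (mul_ne_zero hU0 hDD)]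
      field_simp
    have Bm2 : qnum h (m₀ + ((k:ℂ)-1-1)) = (U*U - (T*T)*(T*T)) / (U*T*(T*T - 1)) := by
      rw [qnum_eq', c4, ← hTdef,
        div_eq_div_iff hD (mul_ne_zero (mul_ne_zero hU0 hT0) hDD)]
      field_simp
    have C2 : qnum h 2 = ((T*T)*(T*T) - 1) / (T*(T*T - 1)) := by
      rw [qnum_eq', c7, ← hTdef, div_eq_div_iff hD (mul_ne_zero hT0 hDD)]
      field_simp
    have G0 : gtA h ℓ m₀ k =
        ((X*X*(U*U)*(T*T) - 1) * (X*X - U*U) * (T*T)) /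
          (X*X*((T*T-1)*(T*T-1))*((U*U+1)*(U*U*(T*T)+1))) := by
      rw [gtA_eq' h ℓ m₀ k, ← hTdef, ← hUdef, ← hXdef,
        div_eq_div_iff (mul_ne_zero (mul_ne_zero hD hD) (mul_ne_zero hS0 hS1))
          (mul_ne_zero (mul_ne_zero (mul_ne_zero hX0 hX0) (mul_ne_zero hDD hDD))
            (mul_ne_zero hP0 hP1))]
      field_simp
    have Gm1 : gtA h ℓ m₀ (k-1) =
        ((X*X*(U*U) - 1) * (X*X*(T*T) - U*U) * (T*T)) /
          (X*X*((T*T-1)*(T*T-1))*((U*U+(T*T))*(U*U+1))) := by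
      rw [gtA_eq' h ℓ m₀ (k-1)]
      push_cast
      rw [c3, ← hTdef, ← hXdef, inv_mul_cancel_right₀ hT0,
        div_eq_div_iff (mul_ne_zero (mul_ne_zero hD hD) (mul_ne_zero hSm1 hS0))
          (mul_ne_zero (mul_ne_zero (mul_ne_zero hX0 hX0) (mul_ne_zero hDD hDD))
            (mul_ne_zero hPm1 hP0))]
      field_simp
    have hq : U * (T*T - 1) ≠ 0 := mul_ne_zero hU0 hDD
    have hqt : T * (T*T - 1) ≠ 0 := mul_ne_zero hT0 hDD
    have hqut : U*T*(T*T - 1) ≠ 0 := mul_ne_zero (mul_ne_zero hU0 hT0) hDD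
    have hG0 : X*X*((T*T-1)*(T*T-1))*((U*U+1)*(U*U*(T*T)+1)) ≠ 0 :=
      mul_ne_zero (mul_ne_zero (mul_ne_zero hX0 hX0) (mul_ne_zero hDD hDD))
        (mul_ne_zero hP0 hP1)
    have hGm : X*X*((T*T-1)*(T*T-1))*((U*U+(T*T))*(U*U+1)) ≠ 0 :=
      mul_ne_zero (mul_ne_zero (mul_ne_zero hX0 hX0) (mul_ne_zero hDD hDD))
        (mul_ne_zero hPm1 hP0)
    have id1 : qnum h (m₀ + ((k:ℂ)+1+1)) - qnum h 2 * qnum h (m₀ + ((k:ℂ)+1))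
        + qnum h (m₀ + (k:ℂ)) = 0 := by
      rw [B2, C2, B1, B0]
      simp only [div_mul_div_comm]
      rw [div_sub_div _ _ hqut (mul_ne_zero hqt hq),
        div_add_div _ _ (mul_ne_zero hqut (mul_ne_zero hqt hq)) hq, div_eq_zero_iff]
      left
      ring
    have id3 : qnum h (m₀ + (k:ℂ)) - qnum h 2 * qnum h (m₀ + ((k:ℂ)-1))
        + qnum h (m₀ + ((k:ℂ)-1-1)) = 0 := by
      rw [Bm2, C2, Bm1, B0]
      simp only [div_mul_div_comm]
      rw [div_sub_div _ _ hq (mul_ne_zero hqt hq),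
        div_add_div _ _ (mul_ne_zero hq (mul_ne_zero hqt hq)) hqut, div_eq_zero_iff]
      left
      ring
    have id2 : 2 * qnum h (m₀ + (k:ℂ)) * (gtA h ℓ m₀ k + gtA h ℓ m₀ (k-1))
        - qnum h 2 * (qnum h (m₀ + ((k:ℂ)+1)) * gtA h ℓ m₀ k
          + qnum h (m₀ + ((k:ℂ)-1)) * gtA h ℓ m₀ (k-1))
        = qnum h (m₀ + (k:ℂ)) := by
      rw [G0, Gm1, C2, B1, Bm1, B0]
      rw [div_add_div _ _ hG0 hGm]
      simp only [div_mul_div_comm, mul_div_assoc', div_mul_eq_mul_div, div_div]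
      rw [div_add_div _ _ (mul_ne_zero hq hG0) (mul_ne_zero hq hGm)]
      simp only [mul_div_assoc', div_div]
      rw [div_sub_div _ _ (mul_ne_zero hq (mul_ne_zero hG0 hGm))
          (mul_ne_zero (mul_ne_zero (mul_ne_zero hq hG0) (mul_ne_zero hq hGm)) hqt),
        div_eq_div_iff
          (mul_ne_zero (mul_ne_zero hq (mul_ne_zero hG0 hGm))
            (mul_ne_zero (mul_ne_zero (mul_ne_zero hq hG0) (mul_ne_zero hq hGm)) hqt)) hq]
      ring
    simp only [LinearMap.sub_apply, LinearMap.add_apply, LinearMap.smul_apply,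
      Module.End.mul_apply, LinearMap.neg_apply, hI21, hI32, map_smul, map_sub, map_add,
      smul_sub, smul_smul, add_sub_cancel_right, sub_add_cancel]
    match_scalars
    · linear_combination (Complex.I * gtA h ℓ m₀ k * gtA h ℓ m₀ (k+1)) * id1
    · linear_combination (-Complex.I) * id2
    · linear_combination Complex.I * id3
  · -- second relation
    apply Finsupp.lhom_ext
    intro k b
    have hb : (Finsupp.single k b : ℤ →₀ ℂ) = b • Finsupp.single k 1 := by
      rw [Finsupp.smul_single' b k 1, mul_one]
    rw [hb, map_smul, map_smul]
    congr 1
    have hU0 : Complex.exp (h*(m₀+(k:ℂ))) ≠ 0 := Complex.exp_ne_zero _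
    have c1 : Complex.exp (h * (m₀ + ((k:ℂ) + 1)))
        = Complex.exp (h*(m₀+(k:ℂ))) * Complex.exp h := by
      rw [show h * (m₀ + ((k:ℂ)+1)) = h*(m₀+(k:ℂ)) + h by ring, Complex.exp_add]
    have c3 : Complex.exp (h * (m₀ + ((k:ℂ) - 1)))
        = Complex.exp (h*(m₀+(k:ℂ))) * (Complex.exp h)⁻¹ := by
      rw [show h * (m₀ + ((k:ℂ)-1)) = h*(m₀+(k:ℂ)) + -h by ring, Complex.exp_add,
        Complex.exp_neg]
    have c7 : Complex.exp (h * 2) = Complex.exp h * Complex.exp h := by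
      rw [show h * 2 = h + h by ring, Complex.exp_add]
    set T := Complex.exp h with hTdef
    set U := Complex.exp (h*(m₀+(k:ℂ))) with hUdef
    have hDD : T * T - 1 ≠ 0 := by
      intro hc
      apply hD
      field_simp
      linear_combination hc
    have B0 : qnum h (m₀ + (k:ℂ)) = (U*U - 1) * T / (U * (T*T - 1)) := by
      rw [qnum_eq', ← hTdef, ← hUdef, div_eq_div_iff hD (mul_ne_zero hU0 hDD)]
      field_simp
    have B1 : qnum h (m₀ + ((k:ℂ)+1)) = (U*U*(T*T) - 1) / (U * (T*T - 1)) := by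
      rw [qnum_eq', c1, ← hTdef, div_eq_div_iff hD (mul_ne_zero hU0 hDD)]
      field_simp
    have Bm1 : qnum h (m₀ + ((k:ℂ)-1)) = (U*U - T*T) / (U * (T*T - 1)) := by
      rw [qnum_eq', c3, ← hTdef, div_eq_div_iff hD (mul_ne_zero hU0 hDD)]
      field_simp
    have C2 : qnum h 2 = ((T*T)*(T*T) - 1) / (T*(T*T - 1)) := by
      rw [qnum_eq', c7, ← hTdef, div_eq_div_iff hD (mul_ne_zero hT0 hDD)]
      field_simp
    have id4 : qnum h (m₀ + ((k:ℂ)+1)) * qnum h (m₀ + ((k:ℂ)+1))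
        - qnum h 2 * qnum h (m₀ + (k:ℂ)) * qnum h (m₀ + ((k:ℂ)+1))
        + qnum h (m₀ + (k:ℂ)) * qnum h (m₀ + (k:ℂ)) = 1 := by
      rw [B1, C2, B0]
      have hq : U * (T*T - 1) ≠ 0 := mul_ne_zero hU0 hDD
      have hqt : T * (T*T - 1) ≠ 0 := mul_ne_zero hT0 hDD
      simp only [div_mul_div_comm]
      rw [div_sub_div _ _ (mul_ne_zero hq hq)
          (mul_ne_zero (mul_ne_zero hqt hq) hq),
        div_add_div _ _ (mul_ne_zero (mul_ne_zero hq hq)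
          (mul_ne_zero (mul_ne_zero hqt hq) hq)) (mul_ne_zero hq hq),
        div_eq_one_iff_eq (mul_ne_zero (mul_ne_zero (mul_ne_zero hq hq)
          (mul_ne_zero (mul_ne_zero hqt hq) hq)) (mul_ne_zero hq hq))]
      ring
    have id5 : qnum h (m₀ + ((k:ℂ)-1)) * qnum h (m₀ + ((k:ℂ)-1))
        - qnum h 2 * qnum h (m₀ + (k:ℂ)) * qnum h (m₀ + ((k:ℂ)-1))
        + qnum h (m₀ + (k:ℂ)) * qnum h (m₀ + (k:ℂ)) = 1 := by
      rw [Bm1, C2, B0]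
      have hq : U * (T*T - 1) ≠ 0 := mul_ne_zero hU0 hDD
      have hqt : T * (T*T - 1) ≠ 0 := mul_ne_zero hT0 hDD
      simp only [div_mul_div_comm]
      rw [div_sub_div _ _ (mul_ne_zero hq hq)
          (mul_ne_zero (mul_ne_zero hqt hq) hq),
        div_add_div _ _ (mul_ne_zero (mul_ne_zero hq hq)
          (mul_ne_zero (mul_ne_zero hqt hq) hq)) (mul_ne_zero hq hq),
        div_eq_one_iff_eq (mul_ne_zero (mul_ne_zero (mul_ne_zero hq hq)
          (mul_ne_zero (mul_ne_zero hqt hq) hq)) (mul_ne_zero hq hq))]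
      ring
    simp only [LinearMap.sub_apply, LinearMap.add_apply, LinearMap.smul_apply,
      Module.End.mul_apply, LinearMap.neg_apply, hI21, hI32, map_smul, map_sub, map_add,
      smul_sub, smul_smul, add_sub_cancel_right, sub_add_cancel]
    match_scalars
    · linear_combination (gtA h ℓ m₀ k * Complex.I^2) * id4 + gtA h ℓ m₀ k * Complex.I_sq
    · linear_combination (-(Complex.I^2)) * id5 + (-1 : ℂ) * Complex.I_sq
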